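/- arXiv:2112.11633 — 4 statements merged into one kernel-verified Lean document; each statement's English description precedes it below -/
import Mathlib

section
/- For nonzero complex numbers q1 and q2, the equation [2]_{q1}²·(2 − (q2² + q2⁻²)) = [2]_{q2}²·(2 + (q1² + q1⁻²)) holds if and only if q1² = −1 or q2⁴ = −1. (This is the case ε_P = −ε_Q = ε_R of the sign equation arising from the braiding classification.) -/
/-- Quantum integer `[2]_q = q + q⁻¹`. -/
noncomputable def qtwo (q : ℂ) : ℂ := q + q⁻¹

/-- For nonzero complex `q1`, `q2`:
`[2]_{q1}²·(2 − (q2² + q2⁻²)) = [2]_{q2}²·(2 + (q1² + q1⁻²))` iff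
`q1² = −1` or `q2⁴ = −1`. -/
theorem sign_equation_case_PmQP (q1 q2 : ℂ) (h1 : q1 ≠ 0) (h2 : q2 ≠ 0) :
    qtwo q1 ^ 2 * (2 - (q2 ^ 2 + (q2⁻¹) ^ 2)) = qtwo q2 ^ 2 * (2 + (q1 ^ 2 + (q1⁻¹) ^ 2)) ↔
      q1 ^ 2 = -1 ∨ q2 ^ 4 = -1 := by
  have hq : q1 ^ 2 * q2 ^ 2 ≠ 0 := mul_ne_zero (pow_ne_zero _ h1) (pow_ne_zero _ h2)
  constructor
  · intro h
    unfold qtwo at h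
    field_simp [qtwo] at h
    have key : q1 ^ 2 * q2 ^ 2 * ((q1 ^ 2 + 1) ^ 2 * (q2 ^ 4 + 1)) = 0 := by
      linear_combination (-(q1 ^ 2 * q2 ^ 2)/2) * h
    rcases mul_eq_zero.1 ((mul_eq_zero.1 key).resolve_left hq) with h' | h'
    · left
      have := pow_eq_zero_iff (n := 2) (by norm_num) |>.1 h'
      linear_combination this
    · right; linear_combination h'
  · rintro (h | h) <;> unfold qtwo <;> field_simp [qtwo]
    · linear_combination (-2 * (q1 ^ 2 + 1) * (q2 ^ 4 + 1)) * h
    · linear_combination (-2 * (q1 ^ 2 + 1) ^ 2) * h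
end

section
/- Let q1, q2 be nonzero complex numbers and let ε_P, ε_Q, ε_R ∈ {1, −1}. Then the equation [2]_{q1}²·(2 − ε_P·ε_R·(q2² + q2⁻²)) = [2]_{q2}²·(2 − ε_Q·ε_R·(q1² + q1⁻²)) holds if and only if one of the following four cases occurs: (i) ε_P = ε_Q = −ε_R; (ii) ε_P = ε_Q = ε_R and (q1² = q2² or q1²·q2² = 1); (iii) ε_P = −ε_Q = ε_R and (q1² = −1 or q2⁴ = −1); (iv) ε_P = −ε_Q = −ε_R and (q1⁴ = −1 or q2² = −1). -/
lemma Lpp (q1 q2 : ℂ) (h1 : q1 ≠ 0) (h2 : q2 ≠ 0) (sP sQ : ℂ) (hsP : sP = 1) (hsQ : sQ = 1) :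
    qtwo q1 ^ 2 * (2 - sP * (q2 ^ 2 + (q2⁻¹) ^ 2)) = qtwo q2 ^ 2 * (2 - sQ * (q1 ^ 2 + (q1⁻¹) ^ 2)) ↔
    (q1 ^ 2 = q2 ^ 2 ∨ q1 ^ 2 * q2 ^ 2 = 1) := by
  subst hsP hsQ
  rw [qtwo, qtwo]
  have hab : q1^2*q2^2 ≠ 0 := mul_ne_zero (pow_ne_zero _ h1) (pow_ne_zero _ h2)
  rw [show (q1 ^ 2 = q2 ^ 2 ∨ q1 ^ 2 * q2 ^ 2 = 1) ↔ (q1^2-q2^2)*(q1^2*q2^2-1) = 0 by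
    rw [mul_eq_zero, sub_eq_zero, sub_eq_zero]]
  constructor
  · intro h
    field_simp at h
    have key : q1^2*q2^2 * ((q1^2-q2^2)*(q1^2*q2^2-1)) = 0 := by
      linear_combination (q1^2*q2^2/4) * h
    exact (mul_eq_zero.mp key).resolve_left hab
  · intro h
    field_simp
    linear_combination 4 * h

lemma Lmm (q1 q2 : ℂ) (h1 : q1 ≠ 0) (h2 : q2 ≠ 0) (sP sQ : ℂ) (hsP : sP = -1) (hsQ : sQ = -1) :
    qtwo q1 ^ 2 * (2 - sP * (q2 ^ 2 + (q2⁻¹) ^ 2)) = qtwo q2 ^ 2 * (2 - sQ * (q1 ^ 2 + (q1⁻¹) ^ 2)) := by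
  subst hsP hsQ
  rw [qtwo, qtwo]; field_simp; ring

lemma Lpm (q1 q2 : ℂ) (h1 : q1 ≠ 0) (h2 : q2 ≠ 0) (sP sQ : ℂ) (hsP : sP = 1) (hsQ : sQ = -1) :
    qtwo q1 ^ 2 * (2 - sP * (q2 ^ 2 + (q2⁻¹) ^ 2)) = qtwo q2 ^ 2 * (2 - sQ * (q1 ^ 2 + (q1⁻¹) ^ 2)) ↔
    (q1 ^ 2 = -1 ∨ q2 ^ 4 = -1) := by
  subst hsP hsQ
  rw [qtwo, qtwo]
  have hab : q1^2*q2^2 ≠ 0 := mul_ne_zero (pow_ne_zero _ h1) (pow_ne_zero _ h2)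
  rw [show (q1 ^ 2 = -1 ∨ q2 ^ 4 = -1) ↔ (q1^2+1)^2*(q2^4+1) = 0 by
    rw [mul_eq_zero, pow_eq_zero_iff two_ne_zero, add_eq_zero_iff_eq_neg,
      add_eq_zero_iff_eq_neg]]
  constructor
  · intro h
    field_simp at h
    have key : q1^2*q2^2 * ((q1^2+1)^2*(q2^4+1)) = 0 := by
      linear_combination (-(q1^2*q2^2)/2) * h
    exact (mul_eq_zero.mp key).resolve_left hab
  · intro h
    field_simp
    linear_combination (-2) * h

lemma Lmp (q1 q2 : ℂ) (h1 : q1 ≠ 0) (h2 : q2 ≠ 0) (sP sQ : ℂ) (hsP : sP = -1) (hsQ : sQ = 1) :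
    qtwo q1 ^ 2 * (2 - sP * (q2 ^ 2 + (q2⁻¹) ^ 2)) = qtwo q2 ^ 2 * (2 - sQ * (q1 ^ 2 + (q1⁻¹) ^ 2)) ↔
    (q1 ^ 4 = -1 ∨ q2 ^ 2 = -1) := by
  subst hsP hsQ
  rw [qtwo, qtwo]
  have hab : q1^2*q2^2 ≠ 0 := mul_ne_zero (pow_ne_zero _ h1) (pow_ne_zero _ h2)
  rw [show (q1 ^ 4 = -1 ∨ q2 ^ 2 = -1) ↔ (q1^4+1)*(q2^2+1)^2 = 0 by
    rw [mul_eq_zero, pow_eq_zero_iff two_ne_zero, add_eq_zero_iff_eq_neg,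
      add_eq_zero_iff_eq_neg]]
  constructor
  · intro h
    field_simp at h
    have key : q1^2*q2^2 * ((q1^4+1)*(q2^2+1)^2) = 0 := by
      linear_combination (q1^2*q2^2/2) * h
    exact (mul_eq_zero.mp key).resolve_left hab
  · intro h
    field_simp
    linear_combination 2 * h

/-- For nonzero complex `q1`, `q2` and signs `εP, εQ, εR ∈ {1, −1}`, the equation
`[2]_{q1}²·(2 − εP·εR·(q2² + q2⁻²)) = [2]_{q2}²·(2 − εQ·εR·(q1² + q1⁻²))` holds iff
one of the four listed sign cases occurs. -/
theorem sign_equation_classification (q1 q2 : ℂ) (h1 : q1 ≠ 0) (h2 : q2 ≠ 0)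
    (εP εQ εR : ℂ) (hP : εP = 1 ∨ εP = -1) (hQ : εQ = 1 ∨ εQ = -1)
    (hR : εR = 1 ∨ εR = -1) :
    qtwo q1 ^ 2 * (2 - εP * εR * (q2 ^ 2 + (q2⁻¹) ^ 2)) =
      qtwo q2 ^ 2 * (2 - εQ * εR * (q1 ^ 2 + (q1⁻¹) ^ 2)) ↔
    ((εP = εQ ∧ εQ = -εR) ∨
     (εP = εQ ∧ εQ = εR ∧ (q1 ^ 2 = q2 ^ 2 ∨ q1 ^ 2 * q2 ^ 2 = 1)) ∨
     (εP = -εQ ∧ εP = εR ∧ (q1 ^ 2 = -1 ∨ q2 ^ 4 = -1)) ∨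
     (εP = -εQ ∧ εP = -εR ∧ (q1 ^ 4 = -1 ∨ q2 ^ 2 = -1))) := by
  rcases hP with rfl | rfl <;> rcases hQ with rfl | rfl <;> rcases hR with rfl | rfl
  · rw [Lpp q1 q2 h1 h2 (1*1) (1*1) (by norm_num) (by norm_num)]; norm_num
  · exact iff_of_true (Lmm q1 q2 h1 h2 _ _ (by norm_num) (by norm_num)) (by norm_num)
  · rw [Lpm q1 q2 h1 h2 (1*1) (-1*1) (by norm_num) (by norm_num)]; norm_num
  · rw [Lmp q1 q2 h1 h2 (1*(-1)) (-1*(-1)) (by norm_num) (by norm_num)]; norm_num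
  · rw [Lmp q1 q2 h1 h2 (-1*1) (1*1) (by norm_num) (by norm_num)]; norm_num
  · rw [Lpm q1 q2 h1 h2 (-1*(-1)) (1*(-1)) (by norm_num) (by norm_num)]; norm_num
  · exact iff_of_true (Lmm q1 q2 h1 h2 _ _ (by norm_num) (by norm_num)) (by norm_num)
  · rw [Lpp q1 q2 h1 h2 (-1*(-1)) (-1*(-1)) (by norm_num) (by norm_num)]; norm_num
end

section
/- With A and ⋆ as in the context: the product ⋆ is associative and commutative, so that (A, ⋆) is a commutative unital associative ℂ-algebra with multiplicative unit E. -/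
/-- The underlying 4-dimensional complex vector space of the convolution algebra,
with coordinates recording the coefficients of the basis vectors `E`, `P`, `Q`, `I`. -/
abbrev ConvAlg : Type := ℂ × ℂ × ℂ × ℂ

/-- The basis vector `E` (the cup–cap diagram). -/
def Ev : ConvAlg := (1, 0, 0, 0)

/-- The basis vector `P` (minimal idempotent projecting onto `X₂ ⊠ 1`). -/
def Pv : ConvAlg := (0, 1, 0, 0)

/-- The basis vector `Q` (minimal idempotent projecting onto `1 ⊠ Y₂`). -/
def Qv : ConvAlg := (0, 0, 1, 0)

/-- The basis vector `I` (the identity of `End(X ⊗ X)`). -/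
def Iv : ConvAlg := (0, 0, 0, 1)

/-- The convolution (horizontal) product on `End(X ⊗ X)` in the category
`C_{q1,q2}`, written in the basis `E, P, Q, I`: it is the unique `ℂ`-bilinear
product with `E ⋆ x = x ⋆ E = x`, `I ⋆ I = D·I`, `I ⋆ P = P ⋆ I = (b1/D)·I`,
`I ⋆ Q = Q ⋆ I = (b2/D)·I`, `P ⋆ P = (b1/D²)·E + ((b1−1)/D)·P`,
`Q ⋆ Q = (b2/D²)·E + ((b2−1)/D)·Q`, and
`P ⋆ Q = Q ⋆ P = (1/D)·(I − (1/D)·E − P − Q)`, where `a1 = [2]_{q1}`,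
`a2 = [2]_{q2}`, `b1 = [3]_{q1}`, `b2 = [3]_{q2}`, `D = a1·a2`. -/
noncomputable def convMul (q1 q2 : ℂ) (x y : ConvAlg) : ConvAlg :=
  let b1 : ℂ := q1 ^ 2 + 1 + (q1⁻¹) ^ 2
  let b2 : ℂ := q2 ^ 2 + 1 + (q2⁻¹) ^ 2
  let D : ℂ := (q1 + q1⁻¹) * (q2 + q2⁻¹)
  let xE := x.1; let xP := x.2.1; let xQ := x.2.2.1; let xI := x.2.2.2
  let yE := y.1; let yP := y.2.1; let yQ := y.2.2.1; let yI := y.2.2.2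
  ( xE * yE + (b1 / D ^ 2) * (xP * yP) + (b2 / D ^ 2) * (xQ * yQ)
      - (1 / D ^ 2) * (xP * yQ + xQ * yP),
    xE * yP + xP * yE + ((b1 - 1) / D) * (xP * yP) - (1 / D) * (xP * yQ + xQ * yP),
    xE * yQ + xQ * yE + ((b2 - 1) / D) * (xQ * yQ) - (1 / D) * (xP * yQ + xQ * yP),
    xE * yI + xI * yE + D * (xI * yI) + (b1 / D) * (xP * yI + xI * yP)
      + (b2 / D) * (xQ * yI + xI * yQ) + (1 / D) * (xP * yQ + xQ * yP) )

set_option maxHeartbeats 2000000 in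
/-- The convolution product is associative and commutative, with two-sided
multiplicative unit `E`; thus `(A, ⋆)` is a commutative unital associative
`ℂ`-algebra. -/
theorem convMul_comm_assoc_unital (q1 q2 : ℂ) (h1 : q1 ≠ 0) (h2 : q2 ≠ 0)
    (ha1 : q1 + q1⁻¹ ≠ 0) (ha2 : q2 + q2⁻¹ ≠ 0) :
    (∀ x y z : ConvAlg,
      convMul q1 q2 (convMul q1 q2 x y) z = convMul q1 q2 x (convMul q1 q2 y z)) ∧
    (∀ x y : ConvAlg, convMul q1 q2 x y = convMul q1 q2 y x) ∧
    (∀ x : ConvAlg, convMul q1 q2 Ev x = x) ∧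
    (∀ x : ConvAlg, convMul q1 q2 x Ev = x) := by
  have hb1 : q1 ^ 2 + 1 + (q1⁻¹) ^ 2 = (q1 + q1⁻¹) ^ 2 - 1 := by field_simp; ring
  have hb2 : q2 ^ 2 + 1 + (q2⁻¹) ^ 2 = (q2 + q2⁻¹) ^ 2 - 1 := by field_simp; ring
  refine ⟨?_, ?_, ?_, ?_⟩
  · rintro ⟨xE, xP, xQ, xI⟩ ⟨yE, yP, yQ, yI⟩ ⟨zE, zP, zQ, zI⟩
    simp only [convMul, hb1, hb2, Prod.mk.injEq]
    generalize q1 + q1⁻¹ = a1 at ha1 ⊢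
    generalize q2 + q2⁻¹ = a2 at ha2 ⊢
    have he1 : a1 * a1⁻¹ = 1 := mul_inv_cancel₀ ha1
    have he2 : a2 * a2⁻¹ = 1 := mul_inv_cancel₀ ha2
    simp only [div_eq_mul_inv, mul_pow, mul_inv, ← inv_pow]
    generalize a1⁻¹ = e1 at he1 ⊢
    generalize a2⁻¹ = e2 at he2 ⊢
    refine ⟨by ring, by ring, by ring, ?_⟩
    linear_combination (-1*a2*e2*xI*yQ*zP + -1*a2*e2*xI*yP*zQ + a2*e2*xQ*yP*zI + a2*e2*xP*yQ*zI + a2^2*e2^2*xI*yQ*zP + a2^2*e2^2*xI*yP*zQ + -1*a2^2*e2^2*xQ*yP*zI + -1*a2^2*e2^2*xP*yQ*zI + a1*a2^2*e1*e2^2*xI*yQ*zP + a1*a2^2*e1*e2^2*xI*yP*zQ + -1*a1*a2^2*e1*e2^2*xQ*yP*zI + -1*a1*a2^2*e1*e2^2*xP*yQ*zI) * he1 + (a2*e2*xI*yQ*zP + a2*e2*xI*yP*zQ + -1*a2*e2*xQ*yP*zI + -1*a2*e2*xP*yQ*zI) * he2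
  · rintro ⟨xE, xP, xQ, xI⟩ ⟨yE, yP, yQ, yI⟩
    simp only [convMul, Prod.mk.injEq]
    refine ⟨by ring, by ring, by ring, by ring⟩
  · rintro ⟨xE, xP, xQ, xI⟩
    simp only [convMul, Ev, Prod.mk.injEq]
    refine ⟨by ring, by ring, by ring, by ring⟩
  · rintro ⟨xE, xP, xQ, xI⟩
    simp only [convMul, Ev, Prod.mk.injEq]
    refine ⟨by ring, by ring, by ring, by ring⟩
end

section
/- With A and ⋆ as in the context: the commutative unital ℂ-algebra (A, ⋆) is isomorphic as a ℂ-algebra to ℂ × ℂ × ℂ × ℂ with componentwise operations. -/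
/-- The convolution product written in terms of `s1 = [2]_{q1}`, `s2 = [2]_{q2}`,
using `[3]_q = [2]_q ^ 2 - 1`. -/
noncomputable def convMulS (s1 s2 : ℂ) (x y : ConvAlg) : ConvAlg :=
  let b1 : ℂ := s1 ^ 2 - 1
  let b2 : ℂ := s2 ^ 2 - 1
  let D : ℂ := s1 * s2
  let xE := x.1; let xP := x.2.1; let xQ := x.2.2.1; let xI := x.2.2.2
  let yE := y.1; let yP := y.2.1; let yQ := y.2.2.1; let yI := y.2.2.2
  ( xE * yE + (b1 / D ^ 2) * (xP * yP) + (b2 / D ^ 2) * (xQ * yQ)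
      - (1 / D ^ 2) * (xP * yQ + xQ * yP),
    xE * yP + xP * yE + ((b1 - 1) / D) * (xP * yP) - (1 / D) * (xP * yQ + xQ * yP),
    xE * yQ + xQ * yE + ((b2 - 1) / D) * (xQ * yQ) - (1 / D) * (xP * yQ + xQ * yP),
    xE * yI + xI * yE + D * (xI * yI) + (b1 / D) * (xP * yI + xI * yP)
      + (b2 / D) * (xQ * yI + xI * yQ) + (1 / D) * (xP * yQ + xQ * yP) )

/-- The four characters of the convolution algebra, as single fractions. -/
noncomputable def phiFun (s1 s2 : ℂ) (x : ConvAlg) : ℂ × ℂ × ℂ × ℂ :=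
  ( (s1 * s2 * x.1 + (s1 ^ 2 - 1) * x.2.1 + (s2 ^ 2 - 1) * x.2.2.1
      + (s1 * s2) ^ 2 * x.2.2.2) / (s1 * s2),
    (s1 * s2 * x.1 + (s1 ^ 2 - 1) * x.2.1 - x.2.2.1) / (s1 * s2),
    (s1 * s2 * x.1 - x.2.1 + (s2 ^ 2 - 1) * x.2.2.1) / (s1 * s2),
    (s1 * s2 * x.1 - x.2.1 - x.2.2.1) / (s1 * s2) )

/-- The inverse of `phiFun`, as single fractions. -/
noncomputable def psiFun (s1 s2 : ℂ) (z : ℂ × ℂ × ℂ × ℂ) : ConvAlg :=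
  ( (s1 ^ 2 * s2 ^ 2 * z.2.2.2 + s2 ^ 2 * (z.2.1 - z.2.2.2) + s1 ^ 2 * (z.2.2.1 - z.2.2.2))
      / (s1 ^ 2 * s2 ^ 2),
    s1 * s2 ^ 3 * (z.2.1 - z.2.2.2) / (s1 ^ 2 * s2 ^ 2),
    s1 ^ 3 * s2 * (z.2.2.1 - z.2.2.2) / (s1 ^ 2 * s2 ^ 2),
    s1 * s2 * (z.1 - z.2.1 - z.2.2.1 + z.2.2.2) / (s1 ^ 2 * s2 ^ 2) )

set_option maxHeartbeats 1000000 in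
theorem convAlgS_iso_product (s1 s2 : ℂ) (hs1 : s1 ≠ 0) (hs2 : s2 ≠ 0) :
    ∃ φ : ConvAlg ≃ₗ[ℂ] ℂ × ℂ × ℂ × ℂ,
      (∀ x y : ConvAlg, φ (convMulS s1 s2 x y) = φ x * φ y) ∧ φ Ev = 1 := by
  refine ⟨{ toFun := phiFun s1 s2
            invFun := psiFun s1 s2
            map_add' := ?_
            map_smul' := ?_
            left_inv := ?_
            right_inv := ?_ }, ?_, ?_⟩
  · intro x y
    simp only [phiFun, Prod.fst_add, Prod.snd_add, Prod.mk_add_mk, Prod.mk.injEq]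
    refine ⟨?_, ?_, ?_, ?_⟩ <;>
      · field_simp
        try ring1
        all_goals try (field_simp; ring1)
        all_goals (rw [div_eq_iff (by simp [hs1, hs2, mul_eq_zero, pow_eq_zero_iff])]; ring)
  · intro c x
    simp only [phiFun, Prod.smul_fst, Prod.smul_snd, Prod.smul_mk, smul_eq_mul,
      RingHom.id_apply, Prod.mk.injEq]
    refine ⟨?_, ?_, ?_, ?_⟩ <;>
      · field_simp
        try ring1
        all_goals try (field_simp; ring1)
        all_goals (rw [div_eq_iff (by simp [hs1, hs2, mul_eq_zero, pow_eq_zero_iff])]; ring)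
  · intro x
    obtain ⟨xE, xP, xQ, xI⟩ := x
    simp only [phiFun, psiFun, Prod.mk.injEq]
    refine ⟨?_, ?_, ?_, ?_⟩ <;>
      · field_simp
        try ring1
        all_goals try (field_simp; ring1)
        all_goals (rw [div_eq_iff (by simp [hs1, hs2, mul_eq_zero, pow_eq_zero_iff])]; ring)
  · intro z
    obtain ⟨z1, z2, z3, z4⟩ := z
    simp only [phiFun, psiFun, Prod.mk.injEq]
    refine ⟨?_, ?_, ?_, ?_⟩ <;>
      · field_simp
        try ring1
        all_goals try (field_simp; ring1)
        all_goals (rw [div_eq_iff (by simp [hs1, hs2, mul_eq_zero, pow_eq_zero_iff])]; ring)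
  · intro x y
    obtain ⟨xE, xP, xQ, xI⟩ := x
    obtain ⟨yE, yP, yQ, yI⟩ := y
    simp only [phiFun, convMulS, LinearEquiv.coe_mk, LinearMap.coe_mk, AddHom.coe_mk,
      Prod.mk_mul_mk, Prod.mk.injEq]
    refine ⟨?_, ?_, ?_, ?_⟩ <;>
      · field_simp
        try ring1
        all_goals try (field_simp; ring1)
        all_goals (rw [div_eq_iff (by simp [hs1, hs2, mul_eq_zero, pow_eq_zero_iff])]; ring)
  · simp only [phiFun, Ev, LinearEquiv.coe_mk, LinearMap.coe_mk, AddHom.coe_mk]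
    have h1 : (1 : ℂ × ℂ × ℂ × ℂ) = (1, 1, 1, 1) := rfl
    rw [h1]
    simp only [Prod.mk.injEq]
    refine ⟨?_, ?_, ?_, ?_⟩ <;> · field_simp; ring
/-- The convolution algebra `(A, ⋆)` is isomorphic as a `ℂ`-algebra to
`ℂ × ℂ × ℂ × ℂ` with componentwise operations: there is a `ℂ`-linear equivalence
carrying `⋆` to the componentwise product and the unit `E` to `(1,1,1,1)`. -/
theorem convAlg_iso_product (q1 q2 : ℂ) (h1 : q1 ≠ 0) (h2 : q2 ≠ 0)
    (ha1 : q1 + q1⁻¹ ≠ 0) (ha2 : q2 + q2⁻¹ ≠ 0) :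
    ∃ φ : ConvAlg ≃ₗ[ℂ] ℂ × ℂ × ℂ × ℂ,
      (∀ x y : ConvAlg, φ (convMul q1 q2 x y) = φ x * φ y) ∧ φ Ev = 1 := by
  have hb1 : q1 ^ 2 + 1 + (q1⁻¹) ^ 2 = (q1 + q1⁻¹) ^ 2 - 1 := by
    field_simp; ring
  have hb2 : q2 ^ 2 + 1 + (q2⁻¹) ^ 2 = (q2 + q2⁻¹) ^ 2 - 1 := by
    field_simp; ring
  have hconv : convMul q1 q2 = convMulS (q1 + q1⁻¹) (q2 + q2⁻¹) := by
    funext x y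
    simp only [convMul, convMulS, hb1, hb2]
  rw [hconv]
  exact convAlgS_iso_product _ _ ha1 ha2
end
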